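/- A spiky function λ on E_n is the connectivity function of a matroid if and only if there is an independent set I of the hypercube graph H_n such that for every transversal X, λ(X) = n − |I ∩ {X, E_n − X}|. -/

import Mathlib

/-- The ground set of a rank-`n` spike: `n` disjoint legs, where the leg `i` consists of
`x_i = (i, true)` and `y_i = (i, false)`. -/
abbrev En (n : ℕ) := Fin n × Bool

/-- The `i`-th leg `L_i = {x_i, y_i}`. -/
def leg (n : ℕ) (i : Fin n) : Set (En n) := {(i, true), (i, false)}

/-- A transversal: a set containing exactly one element of each leg. -/
def IsTransversal {n : ℕ} (X : Set (En n)) : Prop :=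
  ∀ i : Fin n, ((i, true) ∈ X ∧ (i, false) ∉ X) ∨ ((i, true) ∉ X ∧ (i, false) ∈ X)

/-- The hypercube graph `H_n` on transversals: two transversals are adjacent iff they
differ in exactly one element (i.e. their symmetric difference has two elements). -/
def Hn (n : ℕ) : SimpleGraph (Set (En n)) where
  Adj X Y := IsTransversal X ∧ IsTransversal Y ∧ (symmDiff X Y).ncard = 2
  symm := ⟨fun X Y ⟨h1, h2, h3⟩ => ⟨h2, h1, by rwa [symmDiff_comm]⟩⟩
  loopless := ⟨fun X ⟨_, _, h3⟩ => by
    simp [symmDiff_self, Set.bot_eq_empty] at h3⟩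

/-- `I` is an independent set of the hypercube graph `H_n`. -/
def IndepInHn (n : ℕ) (I : Set (Set (En n))) : Prop :=
  (∀ X ∈ I, IsTransversal X) ∧ ∀ X ∈ I, ∀ Y ∈ I, ¬ (Hn n).Adj X Y

/-- `l(X)`: the number of legs which `X` meets. -/
noncomputable def legCount {n : ℕ} (X : Set (En n)) : ℕ :=
  Set.ncard {i : Fin n | (i, true) ∈ X ∨ (i, false) ∈ X}

/-- The rank of a set `X` in a matroid `M`: the largest cardinality of an independent
subset of `X`. -/
noncomputable def mrank {α : Type*} (M : Matroid α) (X : Set α) : ℕ :=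
  sSup {k | ∃ I, M.Indep I ∧ I ⊆ X ∧ I.ncard = k}

/-- The connectivity function of a matroid: μ_M(X) = r(X) + r(E−X) − r(E). -/
noncomputable def mconn {α : Type*} (M : Matroid α) (X : Set α) : ℤ :=
  (mrank M X : ℤ) + (mrank M (M.E \ X) : ℤ) - (mrank M M.E : ℤ)

/-- A circuit of a matroid: a minimal dependent subset of the ground set. -/
def IsCircuit {α : Type*} (M : Matroid α) (C : Set α) : Prop :=
  C ⊆ M.E ∧ ¬ M.Indep C ∧ ∀ D ⊂ C, M.Indep D

/-- The circuits `{x_i, y_i, x_j, y_j}` for `i < j` (i.e. unions of two distinct legs). -/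
def LegPairs (n : ℕ) : Set (Set (En n)) :=
  {C | ∃ i j : Fin n, i ≠ j ∧ C = leg n i ∪ leg n j}

/-- The circuit collection of the spike `S(I)`: unions of two legs, the transversals
in `I`, and all `(n+1)`-element sets containing none of the preceding circuits. -/
def SpikeCircuits (n : ℕ) (I : Set (Set (En n))) : Set (Set (En n)) :=
  (LegPairs n ∪ I) ∪ {C | C.ncard = n + 1 ∧ ∀ D ∈ LegPairs n ∪ I, ¬ D ⊆ C}

open Classical in
/-- The rank function of the free spike `S(∅)` (every rank-`n` spike has this rank
function away from the transversals). -/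
noncomputable def freeSpikeRank (n : ℕ) (X : Set (En n)) : ℕ :=
  if ∀ i : Fin n, ¬ Disjoint (leg n i) X then n
  else if ∃ i, leg n i ⊆ X then legCount X + 1
  else X.ncard

/-- `λ_n(X) = r_n(X) + r_n(E_n − X) − n`: the common value of the connectivity function
of any rank-`n` spike on a non-transversal set `X`. -/
noncomputable def lamN (n : ℕ) (X : Set (En n)) : ℤ :=
  (freeSpikeRank n X : ℤ) + (freeSpikeRank n Xᶜ : ℤ) - (n : ℤ)

/-- A spiky function: symmetric, extends `λ_n` on non-transversals, takes values in
`{n−2, n−1, n}` on transversals, and satisfies `λ(X) + λ(Y) ≥ 2n−2` for transversals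
`X`, `Y` differing in exactly one element. -/
noncomputable def IsSpiky (n : ℕ) (lam : Set (En n) → ℕ) : Prop :=
  (∀ X, lam X = lam Xᶜ) ∧
  (∀ X, ¬ IsTransversal X → (lam X : ℤ) = lamN n X) ∧
  (∀ X, IsTransversal X → lam X = n - 2 ∨ lam X = n - 1 ∨ lam X = n) ∧
  (∀ X Y, IsTransversal X → IsTransversal Y → (symmDiff X Y).ncard = 2 →
    2 * n - 2 ≤ lam X + lam Y)

section Aux
open Set

variable {n : ℕ}

/-- The partner of a point: the other element of its leg. -/
def pt {n : ℕ} (p : En n) : En n := (p.1, !p.2)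

lemma pt_ne {p : En n} : pt p ≠ p := by
  simp [pt, Prod.ext_iff]

lemma mem_leg {i : Fin n} {p : En n} : p ∈ leg n i ↔ p.1 = i := by
  rcases p with ⟨k, b⟩
  cases b <;> simp [leg, Prod.ext_iff]

lemma leg_subset_iff {i : Fin n} {X : Set (En n)} :
    leg n i ⊆ X ↔ (i, true) ∈ X ∧ (i, false) ∈ X := by
  constructor
  · intro h; exact ⟨h (by simp [leg]), h (by simp [leg])⟩
  · rintro ⟨h1, h2⟩ p hp
    rcases p with ⟨k, b⟩
    have : k = i := mem_leg.1 hp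
    subst this; cases b <;> assumption

lemma disjoint_leg_iff {i : Fin n} {X : Set (En n)} :
    Disjoint (leg n i) X ↔ (i, true) ∉ X ∧ (i, false) ∉ X := by
  rw [Set.disjoint_left]
  constructor
  · intro h; exact ⟨h (by simp [leg]), h (by simp [leg])⟩
  · rintro ⟨h1, h2⟩ p hp hpX
    rcases p with ⟨k, b⟩
    have : k = i := mem_leg.1 hp
    subst this; cases b <;> [exact h2 hpX; exact h1 hpX]

lemma not_transversal_of_leg_subset {i : Fin n} {X : Set (En n)} (h : leg n i ⊆ X) :
    ¬ IsTransversal X := by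
  intro hT
  rcases hT i with ⟨_, h2⟩ | ⟨h1, _⟩
  · exact h2 (leg_subset_iff.1 h).2
  · exact h1 (leg_subset_iff.1 h).1

lemma IsTransversal.compl {X : Set (En n)} (h : IsTransversal X) : IsTransversal Xᶜ := by
  intro i
  rcases h i with ⟨h1, h2⟩ | ⟨h1, h2⟩
  · exact Or.inr ⟨by simpa using h1, by simpa using h2⟩
  · exact Or.inl ⟨by simpa using h1, by simpa using h2⟩

lemma IsTransversal.ncard_eq {X : Set (En n)} (h : IsTransversal X) : X.ncard = n := by
  have himg : Prod.fst '' X = Set.univ := by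
    apply Set.eq_univ_of_forall
    intro i
    rcases h i with ⟨h1, _⟩ | ⟨_, h2⟩
    · exact ⟨(i, true), h1, rfl⟩
    · exact ⟨(i, false), h2, rfl⟩
  have hinj : Set.InjOn Prod.fst X := by
    rintro ⟨k, b⟩ hk ⟨l, c⟩ hl (h' : k = l)
    subst h'
    rcases h k with ⟨h1, h2⟩ | ⟨h1, h2⟩ <;> cases b <;> cases c <;>
      first | rfl | (exfalso; tauto)
  calc X.ncard = (Prod.fst '' X).ncard := (Set.ncard_image_of_injOn hinj).symm
    _ = (Set.univ : Set (Fin n)).ncard := by rw [himg]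
    _ = n := by simp [Set.ncard_univ]

lemma IsTransversal.ne_compl (hn : 0 < n) {X : Set (En n)} (h : IsTransversal X) : X ≠ Xᶜ := by
  intro hEq
  rcases h ⟨0, hn⟩ with ⟨h1, _⟩ | ⟨_, h2⟩
  · have := h1; rw [hEq] at this; exact this h1
  · have := h2; rw [hEq] at this; exact this h2

end Aux
set_option linter.unusedSectionVars false
section MrankAux
open Set

variable {α : Type*} [Finite α] {M : Matroid α} {X Y : Set α} {k : ℕ}

lemma mrankSet_nonempty (M : Matroid α) (X : Set α) :
    {k | ∃ I, M.Indep I ∧ I ⊆ X ∧ I.ncard = k}.Nonempty :=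
  ⟨0, ∅, M.empty_indep, Set.empty_subset _, by simp⟩

lemma mrankSet_bddAbove (M : Matroid α) (X : Set α) :
    BddAbove {k | ∃ I, M.Indep I ∧ I ⊆ X ∧ I.ncard = k} := by
  refine ⟨Nat.card α, ?_⟩
  rintro k ⟨I, _, _, rfl⟩
  simpa [Set.ncard_univ] using Set.ncard_le_ncard (Set.subset_univ I) Set.finite_univ

lemma le_mrank {I : Set α} (hI : M.Indep I) (hIX : I ⊆ X) : I.ncard ≤ mrank M X :=
  le_csSup (mrankSet_bddAbove M X) ⟨I, hI, hIX, rfl⟩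

lemma mrank_le (h : ∀ I, M.Indep I → I ⊆ X → I.ncard ≤ k) : mrank M X ≤ k :=
  csSup_le (mrankSet_nonempty M X) (by rintro m ⟨I, hI, hIX, rfl⟩; exact h I hI hIX)

lemma mrank_exists (M : Matroid α) (X : Set α) :
    ∃ I, M.Indep I ∧ I ⊆ X ∧ I.ncard = mrank M X :=
  Nat.sSup_mem (mrankSet_nonempty M X) (mrankSet_bddAbove M X)

lemma mrank_le_ncard (M : Matroid α) (X : Set α) : mrank M X ≤ X.ncard :=
  mrank_le fun _ _ hIX => Set.ncard_le_ncard hIX (Set.toFinite X)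

lemma mrank_mono (h : X ⊆ Y) : mrank M X ≤ mrank M Y :=
  mrank_le fun _ hI hIX => le_mrank hI (hIX.trans h)

lemma mrank_insert_le (M : Matroid α) (X : Set α) (e : α) :
    mrank M (insert e X) ≤ mrank M X + 1 := by
  refine mrank_le fun I hI hIX => ?_
  have h1 : I \ {e} ⊆ X := by
    intro x hx
    rcases hIX hx.1 with rfl | h
    · exact absurd rfl hx.2
    · exact h
  have h2 : (I \ {e}).ncard ≤ mrank M X := le_mrank (hI.subset diff_subset) h1
  have h3 : I.ncard ≤ (I \ {e}).ncard + 1 := by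
    by_cases he : e ∈ I
    · rw [Set.ncard_diff_singleton_of_mem he]
      have := Set.ncard_pos (Set.toFinite I) |>.2 ⟨e, he⟩
      omega
    · rw [Set.diff_singleton_eq_self he]; omega
  omega

lemma indep_of_ncard_le_mrank (h : X.ncard ≤ mrank M X) : M.Indep X := by
  obtain ⟨I, hI, hIX, hcard⟩ := mrank_exists M X
  have : I = X := Set.eq_of_subset_of_ncard_le hIX (by omega) (Set.toFinite X)
  exact this ▸ hI

lemma Matroid.Indep.mrank_eq_ncard {I : Set α} (hI : M.Indep I) : mrank M I = I.ncard :=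
  le_antisymm (mrank_le_ncard M I) (le_mrank hI subset_rfl)

end MrankAux
section ShapeAux
open Set

variable {n : ℕ}

/-- The set of legs met by `X`. -/
def metLegs {n : ℕ} (X : Set (En n)) : Set (Fin n) := {i | (i, true) ∈ X ∨ (i, false) ∈ X}

lemma legCount_eq (X : Set (En n)) : legCount X = (metLegs X).ncard := rfl

lemma mem_metLegs_iff_not_disjoint {X : Set (En n)} {i : Fin n} :
    i ∈ metLegs X ↔ ¬ Disjoint (leg n i) X := by
  rw [disjoint_leg_iff, metLegs, Set.mem_setOf_eq]; tauto

lemma metLegs_mono {X Y : Set (En n)} (h : X ⊆ Y) : metLegs X ⊆ metLegs Y := by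
  intro i hi; rcases hi with h1 | h2
  · exact Or.inl (h h1)
  · exact Or.inr (h h2)

lemma legCount_le (X : Set (En n)) : legCount X ≤ n := by
  rw [legCount_eq]
  simpa [Set.ncard_univ] using Set.ncard_le_ncard (Set.subset_univ (metLegs X)) Set.finite_univ

lemma ncard_univ_diff_singleton (i : Fin n) : ((Set.univ : Set (Fin n)) \ {i}).ncard = n - 1 := by
  rw [Set.ncard_diff (by simp) (Set.toFinite _)]
  simp [Set.ncard_univ]

lemma legCount_le_of_unmet {X : Set (En n)} {i : Fin n} (h : Disjoint (leg n i) X) :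
    legCount X ≤ n - 1 := by
  rw [legCount_eq]
  have hsub : metLegs X ⊆ (Set.univ : Set (Fin n)) \ {i} := by
    intro k hk
    refine ⟨trivial, ?_⟩
    simp only [Set.mem_singleton_iff]
    rintro rfl
    exact (mem_metLegs_iff_not_disjoint.1 hk) h
  calc (metLegs X).ncard ≤ _ := Set.ncard_le_ncard hsub (Set.toFinite _)
    _ = n - 1 := ncard_univ_diff_singleton i

lemma injOn_fst_of_no_full_leg {X : Set (En n)} (h : ∀ k, ¬ leg n k ⊆ X) :
    Set.InjOn Prod.fst X := by
  rintro ⟨k, b⟩ hk ⟨l, c⟩ hl (h' : k = l)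
  subst h'
  by_cases hbc : b = c
  · rw [hbc]
  · exfalso
    apply h k
    rw [leg_subset_iff]
    cases b <;> cases c <;> simp_all

lemma fst_image_eq_metLegs {X : Set (En n)} : Prod.fst '' X = metLegs X := by
  ext i
  constructor
  · rintro ⟨⟨k, b⟩, hk, rfl⟩
    cases b
    · exact Or.inr hk
    · exact Or.inl hk
  · rintro (h1 | h2)
    · exact ⟨(i, true), h1, rfl⟩
    · exact ⟨(i, false), h2, rfl⟩

lemma ncard_eq_legCount_of_no_full_leg {X : Set (En n)} (h : ∀ k, ¬ leg n k ⊆ X) :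
    X.ncard = legCount X := by
  rw [legCount_eq, ← fst_image_eq_metLegs, Set.ncard_image_of_injOn (injOn_fst_of_no_full_leg h)]

lemma exists_full_leg_of_meets_all {X : Set (En n)} (hall : ∀ i : Fin n, ¬ Disjoint (leg n i) X)
    (hT : ¬ IsTransversal X) : ∃ i, leg n i ⊆ X := by
  by_contra h
  push_neg at h
  apply hT
  intro i
  have hd := hall i
  rw [disjoint_leg_iff] at hd
  push_neg at hd
  have hnf := h i
  rw [leg_subset_iff] at hnf
  by_cases h1 : (i, true) ∈ X
  · exact Or.inl ⟨h1, fun h2 => hnf ⟨h1, h2⟩⟩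
  · exact Or.inr ⟨h1, hd h1⟩

/-- A partial transversal missing leg `i`: exactly one point of each leg except `i`. -/
def IsPT (n : ℕ) (i : Fin n) (Z : Set (En n)) : Prop :=
  (∀ k, k ≠ i → (((k, true) ∈ Z ∧ (k, false) ∉ Z) ∨ ((k, true) ∉ Z ∧ (k, false) ∈ Z))) ∧
    (i, true) ∉ Z ∧ (i, false) ∉ Z

namespace IsPT

variable {i : Fin n} {Z : Set (En n)}

lemma no_full_leg (h : IsPT n i Z) : ∀ k, ¬ leg n k ⊆ Z := by
  intro k hk
  rw [leg_subset_iff] at hk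
  by_cases hki : k = i
  · subst hki; exact h.2.1 hk.1
  · rcases h.1 k hki with ⟨_, h2⟩ | ⟨h1, _⟩
    · exact h2 hk.2
    · exact h1 hk.1

lemma unmet (h : IsPT n i Z) : Disjoint (leg n i) Z := disjoint_leg_iff.2 ⟨h.2.1, h.2.2⟩

lemma not_transversal (h : IsPT n i Z) : ¬ IsTransversal Z := by
  intro hT
  rcases hT i with ⟨h1, _⟩ | ⟨_, h2⟩
  · exact h.2.1 h1
  · exact h.2.2 h2

lemma metLegs_eq (h : IsPT n i Z) : metLegs Z = (Set.univ : Set (Fin n)) \ {i} := by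
  ext k
  simp only [metLegs, Set.mem_setOf_eq, Set.mem_diff, Set.mem_univ, Set.mem_singleton_iff,
    true_and]
  constructor
  · rintro (h1 | h2) rfl
    · exact h.2.1 h1
    · exact h.2.2 h2
  · intro hki
    rcases h.1 k hki with ⟨h1, _⟩ | ⟨_, h2⟩
    · exact Or.inl h1
    · exact Or.inr h2

lemma ncard_eq (h : IsPT n i Z) : Z.ncard = n - 1 := by
  rw [ncard_eq_legCount_of_no_full_leg h.no_full_leg, legCount_eq, h.metLegs_eq,
    ncard_univ_diff_singleton]

lemma fsr (h : IsPT n i Z) : freeSpikeRank n Z = n - 1 := by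
  rw [freeSpikeRank, if_neg, if_neg]
  · exact h.ncard_eq
  · push_neg
    intro k hk
    exact h.no_full_leg k hk
  · push_neg
    exact ⟨i, h.unmet⟩

lemma compl_meets_all (h : IsPT n i Z) : ∀ k : Fin n, ¬ Disjoint (leg n k) Zᶜ := by
  intro k hd
  rw [disjoint_leg_iff] at hd
  simp only [Set.mem_compl_iff, not_not] at hd
  exact h.no_full_leg k (leg_subset_iff.2 hd)

lemma compl_fsr (h : IsPT n i Z) : freeSpikeRank n Zᶜ = n := by
  rw [freeSpikeRank, if_pos h.compl_meets_all]

lemma union_meets_all (h : IsPT n i Z) : ∀ k : Fin n, ¬ Disjoint (leg n k) (Z ∪ leg n i) := by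
  intro k hd
  rw [disjoint_leg_iff] at hd
  simp only [Set.mem_union, not_or] at hd
  by_cases hki : k = i
  · subst hki
    exact hd.1.2 (by simp [leg])
  · rcases h.1 k hki with ⟨h1, _⟩ | ⟨_, h2⟩
    · exact hd.1.1 h1
    · exact hd.2.1 h2

lemma union_fsr (h : IsPT n i Z) : freeSpikeRank n (Z ∪ leg n i) = n := by
  rw [freeSpikeRank, if_pos h.union_meets_all]

lemma union_compl_isPT (h : IsPT n i Z) : IsPT n i (Z ∪ leg n i)ᶜ := by
  constructor
  · intro k hki
    have hkt : (k, true) ∈ (Z ∪ leg n i)ᶜ ↔ (k, true) ∉ Z := by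
      simp [Set.mem_union, mem_leg, hki]
    have hkf : (k, false) ∈ (Z ∪ leg n i)ᶜ ↔ (k, false) ∉ Z := by
      simp [Set.mem_union, mem_leg, hki]
    rcases h.1 k hki with ⟨h1, h2⟩ | ⟨h1, h2⟩
    · exact Or.inr ⟨by simp [hkt, h1], by simp [hkf, h2, Set.mem_union, mem_leg, hki]⟩
    · exact Or.inl ⟨by simp [hkt, h1, Set.mem_union, mem_leg, hki], by simp [hkf, h2]⟩
  · constructor <;> simp [Set.mem_union, mem_leg]

lemma not_transversal_union : ¬ IsTransversal (Z ∪ leg n i) :=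
  not_transversal_of_leg_subset Set.subset_union_right

lemma lamN_eq (h : IsPT n i Z) (hn : 0 < n) : lamN n Z = (n : ℤ) - 1 := by
  rw [lamN, h.fsr, h.compl_fsr]
  have : ((n - 1 : ℕ) : ℤ) = (n : ℤ) - 1 := by omega
  rw [this]; ring

lemma lamN_union_eq (h : IsPT n i Z) (hn : 0 < n) : lamN n (Z ∪ leg n i) = (n : ℤ) - 1 := by
  have h2 := h.union_compl_isPT
  rw [lamN, h.union_fsr, h2.fsr]
  have : ((n - 1 : ℕ) : ℤ) = (n : ℤ) - 1 := by omega
  rw [this]; ring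

lemma union_ncard (h : IsPT n i Z) (hn : 0 < n) : (Z ∪ leg n i).ncard = n + 1 := by
  rw [Set.ncard_union_eq (h.unmet.symm) (Set.toFinite _) (Set.toFinite _), h.ncard_eq]
  have : (leg n i).ncard = 2 := by
    rw [leg, Set.ncard_pair (by simp)]
  omega

end IsPT

end ShapeAux
section AxSet
open Set

variable {n : ℕ}

/-- Leg `i` together with the `b`-points of all legs other than `i, j`. -/
def axSet (n : ℕ) (i j : Fin n) (b : Bool) : Set (En n) :=
  leg n i ∪ (fun k => (k, b)) '' (Set.univ \ {i, j})

lemma mem_axSet {i j : Fin n} {b : Bool} {p : En n} :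
    p ∈ axSet n i j b ↔ p.1 = i ∨ (p.1 ≠ i ∧ p.1 ≠ j ∧ p.2 = b) := by
  rcases p with ⟨k, c⟩
  simp only [axSet, Set.mem_union, mem_leg, Set.mem_image, Set.mem_diff, Set.mem_univ,
    Set.mem_insert_iff, Set.mem_singleton_iff, true_and, Prod.mk.injEq]
  constructor
  · rintro (h | ⟨l, hl, rfl, rfl⟩)
    · exact Or.inl h
    · exact Or.inr ⟨fun h => hl (Or.inl h), fun h => hl (Or.inr h), rfl⟩
  · rintro (h | ⟨h1, h2, rfl⟩)
    · exact Or.inl h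
    · exact Or.inr ⟨k, by tauto, rfl, rfl⟩

lemma axSet_compl {i j : Fin n} {b : Bool} (hij : i ≠ j) :
    (axSet n i j b)ᶜ = axSet n j i (!b) := by
  ext ⟨k, c⟩
  simp only [Set.mem_compl_iff, mem_axSet]
  by_cases hk : k = i <;> by_cases hk' : k = j <;> cases c <;> cases b <;>
    simp_all <;> tauto

lemma axSet_full_leg {i j : Fin n} {b : Bool} : leg n i ⊆ axSet n i j b := by
  intro p hp
  exact mem_axSet.2 (Or.inl (mem_leg.1 hp))

lemma axSet_unmet {i j : Fin n} {b : Bool} (hij : i ≠ j) :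
    Disjoint (leg n j) (axSet n i j b) := by
  rw [disjoint_leg_iff]
  constructor <;> · intro h; rcases mem_axSet.1 h with h' | ⟨_, h', _⟩ <;> simp_all

lemma axSet_not_transversal {i j : Fin n} {b : Bool} : ¬ IsTransversal (axSet n i j b) :=
  not_transversal_of_leg_subset axSet_full_leg

lemma axSet_metLegs {i j : Fin n} {b : Bool} (hij : i ≠ j) :
    metLegs (axSet n i j b) = (Set.univ : Set (Fin n)) \ {j} := by
  ext k
  simp only [metLegs, Set.mem_setOf_eq, Set.mem_diff, Set.mem_univ, Set.mem_singleton_iff,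
    true_and, mem_axSet]
  by_cases hk : k = i <;> by_cases hk' : k = j <;> cases b <;> simp_all

lemma axSet_fsr {i j : Fin n} {b : Bool} (hij : i ≠ j) (hn : 0 < n) :
    freeSpikeRank n (axSet n i j b) = n := by
  rw [freeSpikeRank, if_neg, if_pos ⟨i, axSet_full_leg⟩]
  · rw [legCount_eq, axSet_metLegs hij, ncard_univ_diff_singleton]
    omega
  · push_neg
    exact ⟨j, axSet_unmet hij⟩

lemma axSet_lamN {i j : Fin n} {b : Bool} (hij : i ≠ j) (hn : 0 < n) :
    lamN n (axSet n i j b) = (n : ℤ) := by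
  rw [lamN, axSet_fsr hij hn, axSet_compl hij, axSet_fsr hij.symm hn]
  ring

lemma axSet_ncard {i j : Fin n} {b : Bool} (hij : i ≠ j) (hn : 2 ≤ n) :
    (axSet n i j b).ncard = n := by
  rw [axSet, Set.ncard_union_eq ?_ (Set.toFinite _) (Set.toFinite _)]
  · have h1 : (leg n i).ncard = 2 := by rw [leg, Set.ncard_pair (by simp)]
    have h2 : ((fun k => (k, b)) '' ((Set.univ : Set (Fin n)) \ {i, j})).ncard = n - 2 := by
      rw [Set.ncard_image_of_injective _ (fun x y h => by simpa [Prod.ext_iff] using h)]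
      rw [Set.ncard_diff (by simp) (Set.toFinite _)]
      rw [Set.ncard_pair hij]
      simp [Set.ncard_univ]
    omega
  · rw [Set.disjoint_left]
    rintro p hp ⟨l, hl, rfl⟩
    have := mem_leg.1 hp
    simp only [Set.mem_diff, Set.mem_univ, Set.mem_insert_iff, Set.mem_singleton_iff,
      true_and] at hl
    exact hl (Or.inl this)

end AxSet
section Swap
open Set

variable {n : ℕ}

lemma pt_pt (p : En n) : pt (pt p) = p := by
  rcases p with ⟨i, b⟩; cases b <;> rfl

lemma fst_cases (e : En n) (c : Bool) : (e.1, c) = e ∨ (e.1, c) = pt e := by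
  rcases e with ⟨i, b⟩; cases b <;> cases c <;> simp [pt]

lemma IsTransversal.pt_not_mem {X : Set (En n)} (hT : IsTransversal X) {p : En n}
    (hp : p ∈ X) : pt p ∉ X := by
  rcases p with ⟨i, b⟩
  rcases hT i with ⟨h1, h2⟩ | ⟨h1, h2⟩ <;> cases b <;> simp [pt] at * <;> tauto

lemma IsTransversal.pt_mem {X : Set (En n)} (hT : IsTransversal X) {p : En n}
    (hp : p ∉ X) : pt p ∈ X := by
  rcases p with ⟨i, b⟩
  rcases hT i with ⟨h1, h2⟩ | ⟨h1, h2⟩ <;> cases b <;> simp [pt] at * <;> tauto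

lemma swap_transversal {X : Set (En n)} (hT : IsTransversal X) {e : En n} (he : e ∈ X) :
    IsTransversal (insert (pt e) (X \ {e})) := by
  rcases e with ⟨i, b⟩
  intro k
  by_cases hk : k = i
  · subst hk
    have h1 : pt (k, b) ∈ insert (pt (k, b)) (X \ {(k, b)}) := Set.mem_insert _ _
    have h2 : (k, b) ∉ insert (pt (k, b)) (X \ {(k, b)}) := by
      simp [pt, Prod.ext_iff]
    cases b
    · exact Or.inl ⟨h1, h2⟩
    · exact Or.inr ⟨h2, h1⟩
  · have hmem : ∀ c : Bool, ((k, c) ∈ insert (pt (i, b)) (X \ {(i, b)}) ↔ (k, c) ∈ X) := by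
      intro c
      simp only [Set.mem_insert_iff, Set.mem_diff, Set.mem_singleton_iff, pt, Prod.mk.injEq]
      constructor
      · rintro (⟨rfl, rfl⟩ | ⟨h, _⟩)
        · exact absurd rfl hk
        · exact h
      · intro h
        exact Or.inr ⟨h, fun hc => hk (by rw [hc.1])⟩
    rcases hT k with ⟨h1, h2⟩ | ⟨h1, h2⟩
    · exact Or.inl ⟨(hmem true).2 h1, fun h => h2 ((hmem false).1 h)⟩
    · exact Or.inr ⟨fun h => h1 ((hmem true).1 h), (hmem false).2 h2⟩

lemma swap_symmDiff {X : Set (En n)} (hT : IsTransversal X) {e : En n} (he : e ∈ X) :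
    symmDiff X (insert (pt e) (X \ {e})) = {e, pt e} := by
  have hpt : pt e ∉ X := hT.pt_not_mem he
  ext p
  rw [Set.mem_symmDiff]
  constructor
  · rintro (⟨hpX, hpY⟩ | ⟨hpY, hpX⟩)
    · have : p = e := by
        by_contra hne
        exact hpY (Set.mem_insert_iff.2 (Or.inr ⟨hpX, by simpa using hne⟩))
      exact Or.inl this
    · rcases Set.mem_insert_iff.1 hpY with rfl | ⟨h1, _⟩
      · exact Or.inr rfl
      · exact absurd h1 hpX
  · rintro (rfl | rfl)
    · refine Or.inl ⟨he, fun hc => ?_⟩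
      rcases Set.mem_insert_iff.1 hc with h | h
      · exact pt_ne h.symm
      · exact h.2 rfl
    · exact Or.inr ⟨Set.mem_insert _ _, hpt⟩

lemma adj_struct {X Y : Set (En n)} (hX : IsTransversal X) (hY : IsTransversal Y)
    (hcd : (symmDiff X Y).ncard = 2) :
    ∃ (e : En n) (Z : Set (En n)), IsPT n e.1 Z ∧ X = insert e Z ∧ Y = insert (pt e) Z := by
  obtain ⟨u, v, huv, hs⟩ := Set.ncard_eq_two.1 hcd
  have key : ∃ e, e ∈ X ∧ e ∉ Y ∧ pt e ∈ Y ∧ pt e ∉ X ∧ symmDiff X Y = {e, pt e} := by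
    have hu : u ∈ symmDiff X Y := by rw [hs]; exact Or.inl rfl
    rw [Set.mem_symmDiff] at hu
    rcases hu with ⟨huX, huY⟩ | ⟨huY, huX⟩
    · have h1 : pt u ∈ Y := hY.pt_mem huY
      have h2 : pt u ∉ X := hX.pt_not_mem huX
      have h3 : pt u ∈ symmDiff X Y := Set.mem_symmDiff.2 (Or.inr ⟨h1, h2⟩)
      rw [hs] at h3
      rcases Set.mem_insert_iff.1 h3 with h3 | h3
      · exact absurd h3 pt_ne
      · rw [Set.mem_singleton_iff] at h3
        exact ⟨u, huX, huY, h1, h2, by rw [hs, ← h3]⟩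
    · have h1 : pt u ∈ X := hX.pt_mem huX
      have h2 : pt u ∉ Y := hY.pt_not_mem huY
      have h3 : pt u ∈ symmDiff X Y := Set.mem_symmDiff.2 (Or.inl ⟨h1, h2⟩)
      rw [hs] at h3
      rcases Set.mem_insert_iff.1 h3 with h3 | h3
      · exact absurd h3 pt_ne
      · rw [Set.mem_singleton_iff] at h3
        refine ⟨pt u, h1, h2, by rw [pt_pt]; exact huY, by rw [pt_pt]; exact huX, ?_⟩
        rw [hs, pt_pt, ← h3]
        exact Set.pair_comm _ _
  obtain ⟨e, heX, heY, hpeY, hpeX, hsd⟩ := key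
  refine ⟨e, X \ {e}, ⟨?_, ?_, ?_⟩,
    (Set.insert_diff_singleton.trans (Set.insert_eq_self.2 heX)).symm, ?_⟩
  · intro k hk
    have hmem : ∀ c : Bool, ((k, c) ∈ X \ {e} ↔ (k, c) ∈ X) := by
      intro c
      simp only [Set.mem_diff, Set.mem_singleton_iff, and_iff_left_iff_imp]
      intro _ hc
      exact hk (congrArg Prod.fst hc)
    rcases hX k with ⟨h1, h2⟩ | ⟨h1, h2⟩
    · exact Or.inl ⟨(hmem true).2 h1, fun h => h2 ((hmem false).1 h)⟩
    · exact Or.inr ⟨fun h => h1 ((hmem true).1 h), (hmem false).2 h2⟩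
  · intro h
    rcases fst_cases e true with hc | hc
    · exact h.2 (Set.mem_singleton_iff.2 hc)
    · exact hpeX (hc ▸ h.1)
  · intro h
    rcases fst_cases e false with hc | hc
    · exact h.2 (Set.mem_singleton_iff.2 hc)
    · exact hpeX (hc ▸ h.1)
  · ext p
    constructor
    · intro hp
      rcases eq_or_ne p (pt e) with rfl | hne
      · exact Set.mem_insert _ _
      · refine Set.mem_insert_iff.2 (Or.inr ⟨?_, ?_⟩)
        · by_contra hpX
          have : p ∈ symmDiff X Y := Set.mem_symmDiff.2 (Or.inr ⟨hp, hpX⟩)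
          rw [hsd] at this
          rcases this with rfl | h
          · exact heY hp
          · exact hne h
        · simp only [Set.mem_singleton_iff]
          rintro rfl
          exact heY hp
    · rintro (rfl | ⟨hpX, hpe⟩)
      · exact hpeY
      · by_contra hpY
        have : p ∈ symmDiff X Y := Set.mem_symmDiff.2 (Or.inl ⟨hpX, hpY⟩)
        rw [hsd] at this
        rcases this with rfl | h
        · exact hpe rfl
        · rw [h] at hpX; exact hpeX hpX

end Swap
section Forward
open Set

variable {n : ℕ}

lemma mconn_eq_of_ground_univ {M : Matroid (En n)} (hE : M.E = Set.univ) (X : Set (En n)) :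
    mconn M X = (mrank M X : ℤ) + (mrank M Xᶜ : ℤ) - (mrank M Set.univ : ℤ) := by
  rw [mconn, hE, ← Set.compl_eq_univ_diff]

lemma IsTransversal.mrank_le {M : Matroid (En n)} {X : Set (En n)} (hT : IsTransversal X) :
    mrank M X ≤ n := (mrank_le_ncard M X).trans_eq hT.ncard_eq

lemma forward_dir (hn : 2 < n) (lam : Set (En n) → ℕ) (hs : IsSpiky n lam)
    (M : Matroid (En n)) (hE : M.E = Set.univ) (hconn : ∀ X, (lam X : ℤ) = mconn M X) :
    ∃ I : Set (Set (En n)), IndepInHn n I ∧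
      ∀ X, IsTransversal X → (lam X : ℤ) = (n : ℤ) - ((I ∩ {X, Xᶜ}).ncard : ℤ) := by
  have hn0 : 0 < n := by omega
  -- Step 1 : the rank of the ground set is n
  have hi01 : (⟨0, by omega⟩ : Fin n) ≠ ⟨1, by omega⟩ := by simp [Fin.ext_iff]
  set X0 := axSet n ⟨0, by omega⟩ ⟨1, by omega⟩ true with hX0
  have hrkE : mrank M Set.univ = n := by
    have h1 : lamN n X0 = mconn M X0 := by
      rw [← hs.2.1 X0 axSet_not_transversal, hconn]
    rw [axSet_lamN hi01 hn0, mconn_eq_of_ground_univ hE] at h1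
    have b1 : mrank M X0 ≤ n := (mrank_le_ncard M X0).trans_eq (axSet_ncard hi01 (by omega))
    have b2 : mrank M X0ᶜ ≤ n := by
      rw [hX0, axSet_compl hi01]
      exact (mrank_le_ncard M _).trans_eq (axSet_ncard hi01.symm (by omega))
    have b3 : mrank M X0 ≤ mrank M Set.univ := mrank_mono (Set.subset_univ _)
    have b4 : mrank M X0ᶜ ≤ mrank M Set.univ := mrank_mono (Set.subset_univ _)
    omega
  -- Step 2 : every transversal has rank at least n - 1
  have hlb : ∀ X, IsTransversal X → n - 1 ≤ mrank M X := by
    intro X hT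
    by_contra hcon
    push_neg at hcon
    have hXne : X.Nonempty := by
      rw [← Set.ncard_pos (Set.toFinite X), hT.ncard_eq]; omega
    obtain ⟨e, he⟩ := hXne
    set Y := insert (pt e) (X \ {e}) with hYdef
    have hTY : IsTransversal Y := swap_transversal hT he
    have hsd : (symmDiff X Y).ncard = 2 := by
      rw [swap_symmDiff hT he]
      exact Set.ncard_pair (Ne.symm pt_ne)
    have h4 := hs.2.2.2 X Y hT hTY hsd
    have lamX : (lam X : ℤ) = (mrank M X : ℤ) + (mrank M Xᶜ : ℤ) - n := by
      rw [hconn, mconn_eq_of_ground_univ hE, hrkE]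
    have lamY : (lam Y : ℤ) = (mrank M Y : ℤ) + (mrank M Yᶜ : ℤ) - n := by
      rw [hconn, mconn_eq_of_ground_univ hE, hrkE]
    have bXc : mrank M Xᶜ ≤ n := hT.compl.mrank_le
    have bYc : mrank M Yᶜ ≤ n := hTY.compl.mrank_le
    have bY : mrank M Y ≤ mrank M X + 1 := by
      calc mrank M Y ≤ mrank M (insert (pt e) X) :=
            mrank_mono (insert_subset_insert diff_subset)
        _ ≤ mrank M X + 1 := mrank_insert_le M X (pt e)
    omega
  -- the candidate independent set
  refine ⟨{X | IsTransversal X ∧ mrank M X < n}, ⟨fun X hX => hX.1, ?_⟩, ?_⟩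
  · -- no two adjacent
    rintro X ⟨hTX, hrX⟩ Y ⟨hTY, hrY⟩ hadj
    obtain ⟨-, -, hcd⟩ := (show IsTransversal X ∧ IsTransversal Y ∧ (symmDiff X Y).ncard = 2 from hadj)
    obtain ⟨e, Z, hPT, hXZ, hYZ⟩ := adj_struct hTX hTY hcd
    -- Z is independent
    have hZlam : lamN n Z = mconn M Z := by
      rw [← hs.2.1 Z hPT.not_transversal, hconn]
    rw [hPT.lamN_eq hn0, mconn_eq_of_ground_univ hE, hrkE] at hZlam
    have bZ : mrank M Z ≤ n - 1 := (mrank_le_ncard M Z).trans_eq hPT.ncard_eq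
    have bZc : mrank M Zᶜ ≤ n := le_trans (mrank_mono (Set.subset_univ _)) (le_of_eq hrkE)
    have hrZ : mrank M Z = n - 1 := by omega
    have hZindep : M.Indep Z := indep_of_ncard_le_mrank (by rw [hPT.ncard_eq, hrZ])
    -- W = Z ∪ leg e.1 has rank n
    set W := Z ∪ leg n e.1 with hWdef
    have hWlam : lamN n W = mconn M W := by
      rw [← hs.2.1 W (not_transversal_of_leg_subset (Set.subset_union_right)), hconn]
    rw [hPT.lamN_union_eq hn0, mconn_eq_of_ground_univ hE, hrkE] at hWlam
    have bWc : mrank M Wᶜ ≤ n - 1 :=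
      (mrank_le_ncard M Wᶜ).trans_eq hPT.union_compl_isPT.ncard_eq
    have bW : mrank M W ≤ n := le_trans (mrank_mono (Set.subset_univ _)) (le_of_eq hrkE)
    have hrW : mrank M W = n := by omega
    obtain ⟨B, hB, hBW, hBcard⟩ := mrank_exists M W
    rw [hrW] at hBcard
    -- augment Z from B
    have hlt : Z.encard < B.encard := by
      rw [← Set.Finite.cast_ncard_eq (Set.toFinite Z),
        ← Set.Finite.cast_ncard_eq (Set.toFinite B), hPT.ncard_eq, hBcard]
      exact_mod_cast (by omega : n - 1 < n)
    obtain ⟨x, hx, hxind⟩ := hZindep.augment hB hlt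
    have hxleg : x ∈ leg n e.1 := by
      rcases hBW hx.1 with h | h
      · exact absurd h hx.2
      · exact h
    have hxef : x = e ∨ x = pt e := by
      have hx1 : x.1 = e.1 := mem_leg.1 hxleg
      rcases fst_cases e x.2 with hc | hc
      · left; rw [← hc, ← hx1]
      · right; rw [← hc, ← hx1]
    rcases hxef with rfl | rfl
    · have : X.ncard ≤ mrank M X := le_mrank (hXZ ▸ hxind) le_rfl
      rw [hTX.ncard_eq] at this
      omega
    · have : Y.ncard ≤ mrank M Y := le_mrank (hYZ ▸ hxind) le_rfl
      rw [hTY.ncard_eq] at this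
      omega
  · -- the counting formula
    intro X hT
    have hTc := hT.compl
    have hne : X ≠ Xᶜ := hT.ne_compl hn0
    have key : (lam X : ℤ) = (mrank M X : ℤ) + (mrank M Xᶜ : ℤ) - n := by
      rw [hconn, mconn_eq_of_ground_univ hE, hrkE]
    have hX1 := hlb X hT
    have hX2 : mrank M X ≤ n := hT.mrank_le
    have hC1 := hlb Xᶜ hTc
    have hC2 : mrank M Xᶜ ≤ n := hTc.mrank_le
    by_cases hXI : X ∈ {X | IsTransversal X ∧ mrank M X < n} <;>
      by_cases hXcI : Xᶜ ∈ {X | IsTransversal X ∧ mrank M X < n}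
    · have hcc : {X | IsTransversal X ∧ mrank M X < n} ∩ {X, Xᶜ} = {X, Xᶜ} := by
        apply Set.inter_eq_right.2
        rintro p (rfl | rfl) <;> assumption
      rw [hcc, Set.ncard_pair hne]
      have := hXI.2; have := hXcI.2
      omega
    · have hcc : {X | IsTransversal X ∧ mrank M X < n} ∩ {X, Xᶜ} = {X} := by
        ext p
        constructor
        · rintro ⟨hp, rfl | rfl⟩
          · rfl
          · exact absurd hp hXcI
        · rintro rfl
          exact ⟨hXI, Or.inl rfl⟩
      rw [hcc, Set.ncard_singleton]
      have := hXI.2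
      have : mrank M Xᶜ = n := by
        by_contra h
        exact hXcI ⟨hTc, by omega⟩
      omega
    · have hcc : {X | IsTransversal X ∧ mrank M X < n} ∩ {X, Xᶜ} = {Xᶜ} := by
        ext p
        constructor
        · rintro ⟨hp, rfl | rfl⟩
          · exact absurd hp hXI
          · rfl
        · rintro rfl
          exact ⟨hXcI, Or.inr rfl⟩
      rw [hcc, Set.ncard_singleton]
      have := hXcI.2
      have : mrank M X = n := by
        by_contra h
        exact hXI ⟨hT, by omega⟩
      omega
    · have hcc : {X | IsTransversal X ∧ mrank M X < n} ∩ {X, Xᶜ} = ∅ := by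
        ext p
        simp only [Set.mem_inter_iff, Set.mem_empty_iff_false, iff_false, not_and]
        rintro hp (rfl | rfl)
        · exact hXI hp
        · exact hXcI hp
      rw [hcc, Set.ncard_empty]
      have h1 : mrank M X = n := by
        by_contra h
        exact hXI ⟨hT, by omega⟩
      have h2 : mrank M Xᶜ = n := by
        by_contra h
        exact hXcI ⟨hTc, by omega⟩
      omega
end Forward
section SpInd
open Set

variable {n : ℕ}

/-- Independent sets of the spike `S(I)`: sets of size at most `n` containing at most one
full leg and not containing a transversal of `I`. -/
def SpInd (n : ℕ) (I : Set (Set (En n))) (J : Set (En n)) : Prop :=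
  J.ncard ≤ n ∧ (∀ i j : Fin n, i ≠ j → ¬(leg n i ⊆ J ∧ leg n j ⊆ J)) ∧ J ∉ I

lemma leg_subset_iff_pt {S : Set (En n)} {e : En n} :
    leg n e.1 ⊆ S ↔ e ∈ S ∧ pt e ∈ S := by
  rw [leg_subset_iff]
  rcases e with ⟨i, b⟩
  cases b <;> simp [pt] <;> tauto

lemma leg_subset_insert {J : Set (En n)} {e : En n} {i : Fin n}
    (h : leg n i ⊆ insert e J) (hne : i ≠ e.1) : leg n i ⊆ J := by
  intro p hp
  rcases Set.mem_insert_iff.1 (h hp) with rfl | hmem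
  · exact absurd (mem_leg.1 hp).symm hne
  · exact hmem

lemma mem_I_transversal {I : Set (Set (En n))} (hI : IndepInHn n I) {J : Set (En n)}
    (hJ : J ∈ I) : IsTransversal J := hI.1 J hJ

lemma spind_empty (hn : 0 < n) {I : Set (Set (En n))} (hI : IndepInHn n I) :
    SpInd n I ∅ := by
  refine ⟨by simp, ?_, ?_⟩
  · intro i j _ h
    have := h.1 (show (i, true) ∈ leg n i by simp [leg])
    simpa using this
  intro h
  rcases mem_I_transversal hI h ⟨0, hn⟩ with ⟨h1, _⟩ | ⟨_, h2⟩
  · exact h1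
  · exact h2

lemma spind_subset {I : Set (Set (En n))} (hI : IndepInHn n I) ⦃J' J : Set (En n)⦄
    (hJ : SpInd n I J) (hss : J' ⊆ J) : SpInd n I J' := by
  refine ⟨le_trans (Set.ncard_le_ncard hss (Set.toFinite J)) hJ.1,
    fun i j hij h => hJ.2.1 i j hij ⟨h.1.trans hss, h.2.trans hss⟩, ?_⟩
  intro h
  have hT := mem_I_transversal hI h
  have hcard : J.ncard ≤ J'.ncard := by
    rw [hT.ncard_eq]; exact hJ.1
  rw [Set.eq_of_subset_of_ncard_le hss hcard (Set.toFinite J)] at h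
  exact hJ.2.2 h

lemma spind_aug (hn : 0 < n) {I : Set (Set (En n))} (hI : IndepInHn n I)
    ⦃J1 J2 : Set (En n)⦄ (h1 : SpInd n I J1) (h2 : SpInd n I J2)
    (hlt : J1.ncard < J2.ncard) : ∃ e ∈ J2, e ∉ J1 ∧ SpInd n I (insert e J1) := by
  classical
  by_contra hcon
  push_neg at hcon
  -- basic counting
  have hd1 : (J1 ∩ J2).ncard + (J1 \ J2).ncard = J1.ncard :=
    Set.ncard_inter_add_ncard_diff_eq_ncard J1 J2 (Set.toFinite _)
  have hd2 : (J2 ∩ J1).ncard + (J2 \ J1).ncard = J2.ncard :=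
    Set.ncard_inter_add_ncard_diff_eq_ncard J2 J1 (Set.toFinite _)
  have hdd : (J1 \ J2).ncard < (J2 \ J1).ncard := by
    rw [Set.inter_comm J2 J1] at hd2
    omega
  -- insert never violates the cardinality bound
  have hcard : ∀ e ∈ J2, e ∉ J1 → (insert e J1).ncard ≤ n := by
    intro e _ heJ1
    rw [Set.ncard_insert_of_notMem heJ1]
    have := h2.1
    omega
  -- hence each failure is a pair of legs or a transversal of I
  have hfail : ∀ e ∈ J2, e ∉ J1 →
      (∃ i j : Fin n, i ≠ j ∧ leg n i ⊆ insert e J1 ∧ leg n j ⊆ insert e J1) ∨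
        insert e J1 ∈ I := by
    intro e he heJ1
    have := hcon e he heJ1
    rw [SpInd] at this
    push_neg at this
    rcases Classical.em (insert e J1 ∈ I) with hmem | hmem
    · exact Or.inr hmem
    · refine Or.inl ?_
      by_contra hbad
      exact hmem (this (hcard e he heJ1) (fun i j hij hs1 hs2 => hbad ⟨i, j, hij, hs1, hs2⟩))
  by_cases hfull : ∃ i0, leg n i0 ⊆ J1
  · -- J1 contains a full leg i0
    obtain ⟨i0, hi0⟩ := hfull
    have huniq : ∀ j, leg n j ⊆ J1 → j = i0 := by
      intro j hj
      by_contra hji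
      exact h1.2.1 j i0 hji ⟨hj, hi0⟩
    have hkey : ∀ e ∈ J2, e ∉ J1 → pt e ∈ J1 ∧ e.1 ≠ i0 := by
      intro e he heJ1
      rcases hfail e he heJ1 with ⟨i, j, hij, hsi, hsj⟩ | hmem
      · -- one of i, j must be e.1, the other i0
        have hcases : ∀ i j : Fin n, i ≠ j → leg n i ⊆ insert e J1 → leg n j ⊆ insert e J1 →
            i ≠ e.1 → (pt e ∈ J1 ∧ e.1 ≠ i0) := by
          intro i j hij hsi hsj hie
          have hiJ1 : leg n i ⊆ J1 := leg_subset_insert hsi hie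
          have hii0 : i = i0 := huniq i hiJ1
          have hje : j = e.1 := by
            by_contra hje
            exact h1.2.1 i j hij ⟨hiJ1, leg_subset_insert hsj hje⟩
          subst hje
          have hpe : pt e ∈ insert e J1 := (leg_subset_iff_pt.1 hsj).2
          constructor
          · rcases Set.mem_insert_iff.1 hpe with h | h
            · exact absurd h pt_ne
            · exact h
          · rw [← hii0]; exact Ne.symm hij
        by_cases hie : i = e.1
        · subst hie
          exact hcases j e.1 (Ne.symm hij) hsj hsi (Ne.symm hij)
        · exact hcases i j hij hsi hsj hie
      · exact absurd (mem_I_transversal hI hmem)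
          (not_transversal_of_leg_subset (hi0.trans (Set.subset_insert e J1)))
    -- build an injection from J2 \ J1 into J1 \ J2
    by_cases h2b : ∃ c, c ∈ leg n i0 ∧ c ∉ J2
    · obtain ⟨c, hc1, hc2⟩ := h2b
      have hcJ1 : c ∈ J1 \ J2 := ⟨hi0 hc1, hc2⟩
      have hcfst : c.1 = i0 := mem_leg.1 hc1
      set f : En n → En n := fun e => if pt e ∈ J2 then c else pt e with hf
      have hmaps : ∀ e ∈ J2 \ J1, f e ∈ J1 \ J2 := by
        intro e he
        by_cases hpe : pt e ∈ J2
        · have hfe : f e = c := by rw [hf]; simp only [if_pos hpe]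
          rw [hfe]; exact hcJ1
        · have hfe : f e = pt e := by rw [hf]; simp only [if_neg hpe]
          rw [hfe]; exact ⟨(hkey e he.1 he.2).1, hpe⟩
      have hinj : Set.InjOn f (J2 \ J1) := by
        intro a ha b hb hab
        replace hab : (if pt a ∈ J2 then c else pt a) = (if pt b ∈ J2 then c else pt b) := hab
        by_cases hpa : pt a ∈ J2 <;> by_cases hpb : pt b ∈ J2
        · -- both legs full in J2
          by_cases hfab : a.1 = b.1
          · -- same leg : b = a or b = pt a
            have hb' : b = (a.1, b.2) := by rw [hfab]
            rcases fst_cases a b.2 with hc' | hc'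
            · exact (hb'.trans hc').symm
            · exfalso
              have hbpa : b = pt a := hb'.trans hc'
              rw [hbpa] at hb
              exact hb.2 (hkey a ha.1 ha.2).1
          · exfalso
            have hla : leg n a.1 ⊆ J2 := leg_subset_iff_pt.2 ⟨ha.1, hpa⟩
            have hlb : leg n b.1 ⊆ J2 := leg_subset_iff_pt.2 ⟨hb.1, hpb⟩
            exact h2.2.1 a.1 b.1 hfab ⟨hla, hlb⟩
        · exfalso
          rw [if_pos hpa, if_neg hpb] at hab
          have : (pt b).1 = i0 := by rw [← hab, hcfst]
          exact (hkey b hb.1 hb.2).2 this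
        · exfalso
          rw [if_neg hpa, if_pos hpb] at hab
          have : (pt a).1 = i0 := by rw [hab, hcfst]
          exact (hkey a ha.1 ha.2).2 this
        · rw [if_neg hpa, if_neg hpb] at hab
          have := congrArg pt hab
          rwa [pt_pt, pt_pt] at this
      have := Set.ncard_le_ncard_of_injOn f hmaps hinj (Set.toFinite _)
      omega
    · -- leg i0 ⊆ J2 : no partner of J2 \ J1 can lie in J2
      push_neg at h2b
      have hleg2 : leg n i0 ⊆ J2 := h2b
      have hmaps : ∀ e ∈ J2 \ J1, pt e ∈ J1 \ J2 := by
        intro e he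
        refine ⟨(hkey e he.1 he.2).1, fun hpe => ?_⟩
        have hla : leg n e.1 ⊆ J2 := leg_subset_iff_pt.2 ⟨he.1, hpe⟩
        exact h2.2.1 e.1 i0 (hkey e he.1 he.2).2 ⟨hla, hleg2⟩
      have hinj : Set.InjOn pt (J2 \ J1) := by
        intro a _ b _ hab
        have := congrArg pt hab
        rwa [pt_pt, pt_pt] at this
      have := Set.ncard_le_ncard_of_injOn pt hmaps hinj (Set.toFinite _)
      omega
  · -- J1 has no full leg : every failure is a transversal of I
    push_neg at hfull
    have hkey : ∀ e ∈ J2, e ∉ J1 → insert e J1 ∈ I := by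
      intro e he heJ1
      rcases hfail e he heJ1 with ⟨i, j, hij, hsi, hsj⟩ | hmem
      · exfalso
        by_cases hie : i = e.1
        · subst hie
          exact hfull j (leg_subset_insert hsj (Ne.symm hij))
        · exact hfull i (leg_subset_insert hsi hie)
      · exact hmem
    have hex : ∃ e, e ∈ J2 ∧ e ∉ J1 := by
      by_contra hno
      push_neg at hno
      have : J2 ⊆ J1 := hno
      have := Set.ncard_le_ncard this (Set.toFinite J1)
      omega
    obtain ⟨e, he2, he1⟩ := hex
    by_cases hsec : ∃ e', (e' ∈ J2 ∧ e' ∉ J1) ∧ e' ≠ e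
    · obtain ⟨e', ⟨he2', he1'⟩, hee⟩ := hsec
      have hT : insert e J1 ∈ I := hkey e he2 he1
      have hT' : insert e' J1 ∈ I := hkey e' he2' he1'
      apply hI.2 _ hT _ hT'
      show IsTransversal _ ∧ IsTransversal _ ∧ _
      refine ⟨mem_I_transversal hI hT, mem_I_transversal hI hT', ?_⟩
      have hsd : symmDiff (insert e J1) (insert e' J1) = {e, e'} := by
        ext p
        rw [Set.mem_symmDiff]
        simp only [Set.mem_insert_iff, Set.mem_singleton_iff]
        constructor
        · rintro (⟨rfl | hp, hnp⟩ | ⟨rfl | hp, hnp⟩)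
          · exact Or.inl rfl
          · exact absurd (Or.inr hp) hnp
          · exact Or.inr rfl
          · exact absurd (Or.inr hp) hnp
        · rintro (rfl | rfl)
          · exact Or.inl ⟨Or.inl rfl, by push_neg; exact ⟨hee.symm, he1⟩⟩
          · exact Or.inr ⟨Or.inl rfl, by push_neg; exact ⟨hee, he1'⟩⟩
      rw [hsd]
      exact Set.ncard_pair (fun h => hee h.symm)
    · -- J2 = insert e J1, contradiction with J2 ∉ I
      push_neg at hsec
      have hT : insert e J1 ∈ I := hkey e he2 he1
      have hsub : J2 ⊆ insert e J1 := by
        intro x hx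
        by_cases hx1 : x ∈ J1
        · exact Set.mem_insert_iff.2 (Or.inr hx1)
        · rw [hsec x ⟨hx, hx1⟩]
          exact Set.mem_insert _ _
      have hJ2card : (insert e J1).ncard ≤ J2.ncard := by
        rw [Set.ncard_insert_of_notMem he1]
        omega
      rw [← Set.eq_of_subset_of_ncard_le hsub hJ2card (Set.toFinite _)] at hT
      exact h2.2.2 hT

end SpInd
section Backward
open Set

variable {n : ℕ}

lemma ncard_univ_diff_pair {i j : Fin n} (hij : i ≠ j) :
    ((Set.univ : Set (Fin n)) \ {i, j}).ncard = n - 2 := by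
  rw [Set.ncard_diff (by simp) (Set.toFinite _), Set.ncard_pair hij]
  simp [Set.ncard_univ]

lemma spind_card_le {J X : Set (En n)}
    (hJfl : ∀ i j : Fin n, i ≠ j → ¬(leg n i ⊆ J ∧ leg n j ⊆ J)) (hJX : J ⊆ X) :
    J.ncard ≤ legCount X + 1 := by
  by_cases hfull : ∃ i, leg n i ⊆ J
  · obtain ⟨i0, hi0⟩ := hfull
    set J' := J \ leg n i0 with hJ'
    have hnf : ∀ k, ¬ leg n k ⊆ J' := by
      intro k hk
      by_cases hki : k = i0
      · subst hki
        have : (k, true) ∈ J' := hk (by simp [leg])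
        exact this.2 (by simp [leg])
      · exact hJfl k i0 hki ⟨hk.trans diff_subset, hi0⟩
    have h1 : J'.ncard = legCount J' := ncard_eq_legCount_of_no_full_leg hnf
    have h2 : metLegs J' ⊆ metLegs X \ {i0} := by
      intro k hk
      refine ⟨metLegs_mono (diff_subset.trans hJX) hk, ?_⟩
      simp only [Set.mem_singleton_iff]
      rintro rfl
      rcases hk with h | h
      · exact h.2 (by simp [leg])
      · exact h.2 (by simp [leg])
    have hi0m : i0 ∈ metLegs X := Or.inl (hJX (hi0 (by simp [leg])))
    have h3 : (metLegs X \ {i0}).ncard = legCount X - 1 := by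
      rw [legCount_eq]
      exact Set.ncard_diff_singleton_of_mem hi0m
    have h4 : legCount J' ≤ legCount X - 1 := by
      rw [legCount_eq, ← h3]
      exact Set.ncard_le_ncard h2 (Set.toFinite _)
    have h5 : (J ∩ leg n i0).ncard + (J \ leg n i0).ncard = J.ncard :=
      Set.ncard_inter_add_ncard_diff_eq_ncard J (leg n i0) (Set.toFinite _)
    have h6 : J ∩ leg n i0 = leg n i0 := Set.inter_eq_right.2 hi0
    have h7 : (leg n i0).ncard = 2 := by rw [leg, Set.ncard_pair (by simp)]
    have h8 : 1 ≤ legCount X := by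
      rw [legCount_eq]
      exact Set.ncard_pos (Set.toFinite _) |>.2 ⟨i0, hi0m⟩
    rw [h6, h7] at h5
    rw [hJ'] at h1 h4
    omega
  · push_neg at hfull
    have h1 : J.ncard = legCount J := ncard_eq_legCount_of_no_full_leg hfull
    have h2 : legCount J ≤ legCount X := by
      rw [legCount_eq, legCount_eq]
      exact Set.ncard_le_ncard (metLegs_mono hJX) (Set.toFinite _)
    omega

lemma spind_construct {I : Set (Set (En n))} (hI : IndepInHn n I) {X : Set (En n)}
    {i0 : Fin n} (hi0 : leg n i0 ⊆ X) (T : Set (Fin n)) (hT : T ⊆ metLegs X)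
    (hi0T : i0 ∉ T) (hcard : T.ncard + 2 ≤ n) :
    ∃ B, SpInd n I B ∧ B ⊆ X ∧ B.ncard = T.ncard + 2 := by
  classical
  set g : Fin n → Bool := fun i => if (i, true) ∈ X then true else false with hg
  have hgmem : ∀ i ∈ metLegs X, (i, g i) ∈ X := by
    intro i hi
    by_cases h : (i, true) ∈ X
    · have : g i = true := by rw [hg]; simp [h]
      rw [this]; exact h
    · have : g i = false := by rw [hg]; simp [h]
      rw [this]
      rcases hi with h' | h'
      · exact absurd h' h
      · exact h'
  set B := leg n i0 ∪ (fun i => (i, g i)) '' T with hB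
  have hnotleg : ∀ j, j ≠ i0 → ¬ leg n j ⊆ B := by
    intro j hj hsub
    have ht : (j, true) ∈ B := hsub (by simp [leg])
    have hf : (j, false) ∈ B := hsub (by simp [leg])
    have hval : ∀ c : Bool, (j, c) ∈ B → g j = c := by
      intro c hc
      rcases hc with h | ⟨l, _, hl⟩
      · exact absurd (mem_leg.1 h) hj
      · have h1 : l = j := congrArg Prod.fst hl
        have h2 : g l = c := congrArg Prod.snd hl
        rw [← h1]; exact h2
    have := hval true ht
    have := hval false hf
    simp_all
  refine ⟨B, ⟨?_, ?_, ?_⟩, ?_, ?_⟩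
  · -- ncard ≤ n
    have : B.ncard = T.ncard + 2 := ?_
    · omega
    rw [hB, Set.ncard_union_eq ?_ (Set.toFinite _) (Set.toFinite _)]
    · rw [Set.ncard_image_of_injective _ (fun x y h => congrArg Prod.fst h),
        leg, Set.ncard_pair (by simp)]
      omega
    · rw [Set.disjoint_left]
      rintro p hp ⟨l, hl, rfl⟩
      exact hi0T ((mem_leg.1 hp) ▸ hl)
  · -- at most one full leg
    intro i j hij h
    by_cases hi : i = i0
    · subst hi
      exact hnotleg j (Ne.symm hij) h.2
    · exact hnotleg i hi h.1
  · -- not in I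
    intro h
    exact not_transversal_of_leg_subset (Set.subset_union_left (s := leg n i0)
      (t := (fun i => (i, g i)) '' T)) (hI.1 B h)
  · -- B ⊆ X
    rw [hB]
    rintro p (hp | ⟨l, hl, rfl⟩)
    · exact hi0 hp
    · exact hgmem l (hT hl)
  · -- cardinality
    rw [hB, Set.ncard_union_eq ?_ (Set.toFinite _) (Set.toFinite _)]
    · rw [Set.ncard_image_of_injective _ (fun x y h => congrArg Prod.fst h),
        leg, Set.ncard_pair (by simp)]
      omega
    · rw [Set.disjoint_left]
      rintro p hp ⟨l, hl, rfl⟩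
      exact hi0T ((mem_leg.1 hp) ▸ hl)

lemma fin_exists_ne (hn : 2 < n) (i : Fin n) : ∃ j : Fin n, j ≠ i := by
  by_cases h : i = ⟨0, by omega⟩
  · exact ⟨⟨1, by omega⟩, by rw [h]; simp [Fin.ext_iff]⟩
  · exact ⟨⟨0, by omega⟩, fun hc => h hc.symm⟩

lemma spike_mrank_nontrans (hn : 2 < n) {I : Set (Set (En n))} (hI : IndepInHn n I)
    {M : Matroid (En n)} (hM : ∀ J, M.Indep J ↔ SpInd n I J) {X : Set (En n)}
    (hX : ¬ IsTransversal X) : mrank M X = freeSpikeRank n X := by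
  by_cases hall : ∀ i, ¬ Disjoint (leg n i) X
  · rw [freeSpikeRank, if_pos hall]
    apply le_antisymm
    · exact mrank_le fun J hJ _ => ((hM J).1 hJ).1
    · obtain ⟨i0, hi0⟩ := exists_full_leg_of_meets_all hall hX
      obtain ⟨j1, hj1⟩ := fin_exists_ne hn i0
      have hmet : metLegs X = Set.univ :=
        Set.eq_univ_of_forall fun i => mem_metLegs_iff_not_disjoint.2 (hall i)
      have hT : (Set.univ : Set (Fin n)) \ {i0, j1} ⊆ metLegs X := by
        rw [hmet]; exact diff_subset
      have hcc : ((Set.univ : Set (Fin n)) \ {i0, j1}).ncard + 2 ≤ n := by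
        rw [ncard_univ_diff_pair (Ne.symm hj1)]
        omega
      obtain ⟨B, hB, hBX, hBcard⟩ := spind_construct hI hi0 _ hT (by simp) hcc
      have := le_mrank ((hM B).2 hB) hBX
      rw [hBcard, ncard_univ_diff_pair (Ne.symm hj1)] at this
      omega
  · have hunmet : ∃ i, Disjoint (leg n i) X := by push_neg at hall; exact hall
    obtain ⟨iu, hiu⟩ := hunmet
    rw [freeSpikeRank, if_neg (by push_neg; exact ⟨iu, hiu⟩)]
    by_cases hfull : ∃ i, leg n i ⊆ X
    · rw [if_pos hfull]
      obtain ⟨i0, hi0⟩ := hfull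
      apply le_antisymm
      · exact mrank_le fun J hJ hJX => spind_card_le ((hM J).1 hJ).2.1 hJX
      · have hi0m : i0 ∈ metLegs X := Or.inl (hi0 (by simp [leg]))
        have h8 : 1 ≤ legCount X := by
          rw [legCount_eq]
          exact Set.ncard_pos (Set.toFinite _) |>.2 ⟨i0, hi0m⟩
        have hmc : (metLegs X \ {i0}).ncard = legCount X - 1 := by
          rw [legCount_eq]
          exact Set.ncard_diff_singleton_of_mem hi0m
        have hlc : legCount X ≤ n - 1 := legCount_le_of_unmet hiu
        have hcc : (metLegs X \ {i0}).ncard + 2 ≤ n := by rw [hmc]; omega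
        obtain ⟨B, hB, hBX, hBcard⟩ := spind_construct hI hi0 (metLegs X \ {i0})
          diff_subset (by simp) hcc
        have := le_mrank ((hM B).2 hB) hBX
        rw [hBcard, hmc] at this
        omega
    · rw [if_neg hfull]
      push_neg at hfull
      apply le_antisymm (mrank_le_ncard M X)
      refine le_mrank ((hM X).2 ⟨?_, ?_, ?_⟩) le_rfl
      · rw [ncard_eq_legCount_of_no_full_leg hfull]
        exact legCount_le X
      · exact fun i j hij h => hfull i h.1
      · exact fun h => hX (hI.1 X h)

lemma spike_mrank_trans (hn : 0 < n) {I : Set (Set (En n))} (hI : IndepInHn n I)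
    {M : Matroid (En n)} (hM : ∀ J, M.Indep J ↔ SpInd n I J) {X : Set (En n)}
    (hX : IsTransversal X) (hXI : X ∈ I) : mrank M X = n - 1 := by
  have hnleg : ∀ i, ¬ leg n i ⊆ X := fun i h => not_transversal_of_leg_subset h hX
  · apply le_antisymm
    · refine mrank_le fun J hJ hJX => ?_
      have hJs := (hM J).1 hJ
      by_contra hc
      push_neg at hc
      have hJn : X.ncard ≤ J.ncard := by rw [hX.ncard_eq]; omega
      rw [← Set.eq_of_subset_of_ncard_le hJX hJn (Set.toFinite _)] at hXI
      exact hJs.2.2 hXI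
    · have hne : X.Nonempty := by
        rw [← Set.ncard_pos (Set.toFinite _), hX.ncard_eq]; omega
      obtain ⟨e, he⟩ := hne
      have hcard : (X \ {e}).ncard = n - 1 := by
        rw [Set.ncard_diff_singleton_of_mem he, hX.ncard_eq]
      have hspind : SpInd n I (X \ {e}) := by
        refine ⟨by omega, fun i j hij h => hnleg i (h.1.trans diff_subset), fun h => ?_⟩
        have := (hI.1 _ h).ncard_eq
        omega
      have := le_mrank ((hM _).2 hspind) diff_subset
      omega

lemma spike_mrank_trans_not (hn : 0 < n) {I : Set (Set (En n))} (hI : IndepInHn n I)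
    {M : Matroid (En n)} (hM : ∀ J, M.Indep J ↔ SpInd n I J) {X : Set (En n)}
    (hX : IsTransversal X) (hXI : X ∉ I) : mrank M X = n := by
  have hnleg : ∀ i, ¬ leg n i ⊆ X := fun i h => not_transversal_of_leg_subset h hX
  · apply le_antisymm
    · refine mrank_le fun J hJ hJX => ?_
      have := Set.ncard_le_ncard hJX (Set.toFinite _)
      rw [hX.ncard_eq] at this
      exact this
    · have hspind : SpInd n I X :=
        ⟨le_of_eq hX.ncard_eq, fun i j hij h => hnleg i h.1, hXI⟩
      have := le_mrank ((hM X).2 hspind) le_rfl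
      rw [hX.ncard_eq] at this
      exact this

lemma univ_not_transversal (hn : 0 < n) : ¬ IsTransversal (Set.univ : Set (En n)) := by
  intro h
  rcases h ⟨0, hn⟩ with ⟨_, h2⟩ | ⟨h1, _⟩
  · exact h2 trivial
  · exact h1 trivial

lemma fsr_univ (n : ℕ) : freeSpikeRank n (Set.univ : Set (En n)) = n := by
  rw [freeSpikeRank, if_pos]
  intro i h
  rw [disjoint_leg_iff] at h
  exact h.1 trivial

lemma backward_dir (hn : 2 < n) (lam : Set (En n) → ℕ) (hs : IsSpiky n lam)
    (I : Set (Set (En n))) (hI : IndepInHn n I)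
    (hform : ∀ X, IsTransversal X → (lam X : ℤ) = (n : ℤ) - ((I ∩ {X, Xᶜ}).ncard : ℤ)) :
    ∃ M : Matroid (En n), M.E = Set.univ ∧ ∀ X, (lam X : ℤ) = mconn M X := by
  have hn0 : 0 < n := by omega
  set M := (IndepMatroid.ofFinite (Set.finite_univ (α := En n)) (SpInd n I)
    (spind_empty hn0 hI) (spind_subset hI) (spind_aug hn0 hI)
    (fun J _ => Set.subset_univ J)).matroid with hMdef
  have hE : M.E = Set.univ := rfl
  have hMI : ∀ J, M.Indep J ↔ SpInd n I J := fun J => Iff.rfl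
  have hrkU : mrank M Set.univ = n := by
    rw [spike_mrank_nontrans hn hI hMI (univ_not_transversal hn0), fsr_univ]
  refine ⟨M, hE, fun X => ?_⟩
  rw [mconn_eq_of_ground_univ hE, hrkU]
  by_cases hT : IsTransversal X
  · have hTc := hT.compl
    have hne : X ≠ Xᶜ := hT.ne_compl hn0
    rw [hform X hT]
    by_cases hXI : X ∈ I <;> by_cases hXcI : Xᶜ ∈ I
    · have hcc : I ∩ {X, Xᶜ} = {X, Xᶜ} := by
        apply Set.inter_eq_right.2
        rintro p (rfl | rfl) <;> assumption
      rw [hcc, Set.ncard_pair hne, spike_mrank_trans hn0 hI hMI hT hXI,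
        spike_mrank_trans hn0 hI hMI hTc hXcI]
      omega
    · have hcc : I ∩ {X, Xᶜ} = {X} := by
        ext p
        constructor
        · rintro ⟨hp, rfl | rfl⟩
          · rfl
          · exact absurd hp hXcI
        · rintro rfl
          exact ⟨hXI, Or.inl rfl⟩
      rw [hcc, Set.ncard_singleton, spike_mrank_trans hn0 hI hMI hT hXI,
        spike_mrank_trans_not hn0 hI hMI hTc hXcI]
      omega
    · have hcc : I ∩ {X, Xᶜ} = {Xᶜ} := by
        ext p
        constructor
        · rintro ⟨hp, rfl | rfl⟩
          · exact absurd hp hXI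
          · rfl
        · rintro rfl
          exact ⟨hXcI, Or.inr rfl⟩
      rw [hcc, Set.ncard_singleton, spike_mrank_trans_not hn0 hI hMI hT hXI,
        spike_mrank_trans hn0 hI hMI hTc hXcI]
      omega
    · have hcc : I ∩ {X, Xᶜ} = ∅ := by
        ext p
        simp only [Set.mem_inter_iff, Set.mem_empty_iff_false, iff_false, not_and]
        rintro hp (rfl | rfl)
        · exact hXI hp
        · exact hXcI hp
      rw [hcc, Set.ncard_empty, spike_mrank_trans_not hn0 hI hMI hT hXI,
        spike_mrank_trans_not hn0 hI hMI hTc hXcI]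
      omega
  · have hTc : ¬ IsTransversal Xᶜ := by
      intro h
      exact hT (by simpa using h.compl)
    rw [hs.2.1 X hT, spike_mrank_nontrans hn hI hMI hT, spike_mrank_nontrans hn hI hMI hTc,
      lamN]

end Backward
/-- A spiky function is the connectivity function of a matroid iff there is an independent
set `I` of `H_n` with `λ(X) = n − |I ∩ {X, E_n − X}|` for every transversal `X`. -/
theorem stmt12 {n : ℕ} (hn : 2 < n) (lam : Set (En n) → ℕ) (hs : IsSpiky n lam) :
    (∃ M : Matroid (En n), M.E = Set.univ ∧ ∀ X, (lam X : ℤ) = mconn M X) ↔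
    (∃ I : Set (Set (En n)), IndepInHn n I ∧
      ∀ X, IsTransversal X → (lam X : ℤ) = (n : ℤ) - ((I ∩ {X, Xᶜ}).ncard : ℤ)) := by
  constructor
  · rintro ⟨M, hE, hconn⟩
    exact forward_dir hn lam hs M hE hconn
  · rintro ⟨I, hI, hform⟩
    exact backward_dir hn lam hs I hI hform
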